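/- Let Γ be a finite connected graph without loops, with vertex set V, edge multiplicities e_{ij} ∈ ℕ between distinct vertices, and integer weights q_i on vertices. Suppose (n, e) ∈ ℕ^V × (ℕ₊)^V satisfies e_i n_i = q_i + Σ_{j≠i} e_{ij} n_j for all i ∈ V, and the quadratic form Q(x) = Σ_i x_i(−e_i x_i + Σ_{j≠i} e_{ij} x_j) is negative definite. Then the set of vectors n ∈ ℕ^V that can be extended to such a solution (n, e) is finite. -/

import Mathlib

open Finset

/-- For a finite connected loopless graph with edge multiplicities `w` and integer
weights `q`, the set of vectors `n : V → ℕ` extendable to a solution `(n, e)` of the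
adjunction system `e i * n i = q i + ∑_{j ≠ i} w i j * n j` with negative definite
intersection form is finite. -/
theorem stmt_0 {V : Type*} [Fintype V] [DecidableEq V]
    (w : V → V → ℕ) (hsymm : ∀ i j, w i j = w j i) (hdiag : ∀ i, w i i = 0)
    (hconn : (SimpleGraph.fromRel (fun i j => 0 < w i j)).Connected)
    (q : V → ℤ) :
    {n : V → ℕ | ∃ e : V → ℕ, (∀ i, 1 ≤ e i) ∧
      (∀ i, (e i : ℤ) * n i = q i + ∑ j ∈ univ.erase i, (w i j : ℤ) * n j) ∧
      (∀ x : V → ℝ, x ≠ 0 →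
        ∑ i, x i * (-(e i : ℝ) * x i + ∑ j ∈ univ.erase i, (w i j : ℝ) * x j) < 0)}.Finite := by
  rw [← Set.not_infinite]
  intro hinf
  obtain f := hinf.natEmbedding
  choose e hpos heq hneg using fun k => (f k).2
  obtain ⟨m, k, hmk, hle⟩ := (Set.partiallyWellOrderedOn_iff_exists_lt.mp (Set.isPWO_of_wellQuasiOrderedLE (Set.univ : Set (V ⊕ V → ℕ))))
    (fun t => Sum.elim (↑(f t)) (e t)) (fun _ => Set.mem_univ _)
  set a : V → ℕ := ↑(f m) with ha
  set b : V → ℕ := ↑(f k) with hb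
  have hab : ∀ i, a i ≤ b i := fun i => hle (Sum.inl i)
  have hee : ∀ i, e m i ≤ e k i := fun i => hle (Sum.inr i)
  have hne : a ≠ b := by
    intro h
    exact hmk.ne (f.injective (Subtype.ext h))
  -- the difference vector, as a real vector
  have hx : (fun i => (b i : ℝ) - (a i : ℝ)) ≠ 0 := by
    intro h
    apply hne
    funext i
    have := congrFun h i
    simp only [Pi.zero_apply, sub_eq_zero] at this
    exact_mod_cast this.symm
  have hcontra := hneg k (fun i => (b i : ℝ) - (a i : ℝ)) hx
  have key : ∀ i : V, (-(e k i : ℝ) * ((b i : ℝ) - (a i : ℝ)) +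
      ∑ j ∈ univ.erase i, (w i j : ℝ) * ((b j : ℝ) - (a j : ℝ)))
      = ((e k i : ℝ) - (e m i : ℝ)) * (a i : ℝ) := by
    intro i
    have h1 : (e m i : ℝ) * (a i : ℝ)
        = (q i : ℝ) + ∑ j ∈ univ.erase i, (w i j : ℝ) * (a j : ℝ) := by
      exact_mod_cast heq m i
    have h2 : (e k i : ℝ) * (b i : ℝ)
        = (q i : ℝ) + ∑ j ∈ univ.erase i, (w i j : ℝ) * (b j : ℝ) := by
      exact_mod_cast heq k i
    have hs : ∑ j ∈ univ.erase i, (w i j : ℝ) * ((b j : ℝ) - (a j : ℝ))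
        = (∑ j ∈ univ.erase i, (w i j : ℝ) * (b j : ℝ))
          - ∑ j ∈ univ.erase i, (w i j : ℝ) * (a j : ℝ) := by
      rw [← Finset.sum_sub_distrib]
      exact Finset.sum_congr rfl fun j _ => by ring
    rw [hs]
    linarith [h1, h2]
  have hge : (0 : ℝ) ≤ ∑ i, ((b i : ℝ) - (a i : ℝ)) *
      (-(e k i : ℝ) * ((b i : ℝ) - (a i : ℝ)) +
        ∑ j ∈ univ.erase i, (w i j : ℝ) * ((b j : ℝ) - (a j : ℝ))) := by
    apply Finset.sum_nonneg
    intro i _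
    rw [key i]
    have h1 : (0 : ℝ) ≤ (b i : ℝ) - (a i : ℝ) := by
      have := hab i; simp only [sub_nonneg]; exact_mod_cast this
    have h2 : (0 : ℝ) ≤ (e k i : ℝ) - (e m i : ℝ) := by
      have := hee i; simp only [sub_nonneg]; exact_mod_cast this
    have h3 : (0 : ℝ) ≤ (a i : ℝ) := Nat.cast_nonneg _
    positivity
  exact absurd hcontra (not_lt.2 hge)
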